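/- The two conserved quantities H₁ = I₁/I₀ and H₂ = I₂/I₀ are in involution with respect to the log-canonical Poisson bracket: {H₁, H₂}(x) = 0 at every point x = (q₁,p₁,q₂,p₂) ∈ ℂ⁴ with q₁p₁q₂p₂ ≠ 0. -/

import Mathlib

/-- The map φ(q₁,p₁,q₂,p₂) = ((1+b·q₂)/(q₁q₂p₂), q₂, (1+b·q₁)/(q₁p₁q₂), q₁). -/
noncomputable def phi (b : ℂ) : ℂ × ℂ × ℂ × ℂ → ℂ × ℂ × ℂ × ℂ :=
  fun x => ((1 + b * x.2.2.1) / (x.1 * x.2.2.1 * x.2.2.2), x.2.2.1,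
            (1 + b * x.1) / (x.1 * x.2.1 * x.2.2.1), x.1)

/-- I₀ = q₁p₁q₂p₂. -/
def I0 : ℂ × ℂ × ℂ × ℂ → ℂ
  | (q1, p1, q2, p2) => q1 * p1 * q2 * p2

/-- I₁ = q₁p₁ + q₂p₂ + b(q₁p₁p₂ + p₁q₂p₂ + q₁p₁q₂ + q₁q₂p₂) + q₁²p₁q₂p₂² + q₁p₁²q₂²p₂. -/
def I1 (b : ℂ) : ℂ × ℂ × ℂ × ℂ → ℂ
  | (q1, p1, q2, p2) =>
      q1 * p1 + q2 * p2
        + b * (q1 * p1 * p2 + p1 * q2 * p2 + q1 * p1 * q2 + q1 * q2 * p2)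
        + q1 ^ 2 * p1 * q2 * p2 ^ 2 + q1 * p1 ^ 2 * q2 ^ 2 * p2

/-- I₂ = 1 + q₁²p₁²q₂²p₂² + b(1+q₁p₁q₂p₂)(q₁+p₁+q₂+p₂) + b²(q₁q₂+q₁p₂+p₁q₂+p₁p₂). -/
def I2 (b : ℂ) : ℂ × ℂ × ℂ × ℂ → ℂ
  | (q1, p1, q2, p2) =>
      1 + q1 ^ 2 * p1 ^ 2 * q2 ^ 2 * p2 ^ 2
        + b * (1 + q1 * p1 * q2 * p2) * (q1 + p1 + q2 + p2)
        + b ^ 2 * (q1 * q2 + q1 * p2 + p1 * q2 + p1 * p2)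

/-- Partial derivative with respect to the first coordinate q₁. -/
noncomputable def pdq1 (f : ℂ × ℂ × ℂ × ℂ → ℂ) (x : ℂ × ℂ × ℂ × ℂ) : ℂ :=
  deriv (fun t => f (t, x.2.1, x.2.2.1, x.2.2.2)) x.1

/-- Partial derivative with respect to the second coordinate p₁. -/
noncomputable def pdp1 (f : ℂ × ℂ × ℂ × ℂ → ℂ) (x : ℂ × ℂ × ℂ × ℂ) : ℂ :=
  deriv (fun t => f (x.1, t, x.2.2.1, x.2.2.2)) x.2.1

/-- Partial derivative with respect to the third coordinate q₂. -/
noncomputable def pdq2 (f : ℂ × ℂ × ℂ × ℂ → ℂ) (x : ℂ × ℂ × ℂ × ℂ) : ℂ :=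
  deriv (fun t => f (x.1, x.2.1, t, x.2.2.2)) x.2.2.1

/-- Partial derivative with respect to the fourth coordinate p₂. -/
noncomputable def pdp2 (f : ℂ × ℂ × ℂ × ℂ → ℂ) (x : ℂ × ℂ × ℂ × ℂ) : ℂ :=
  deriv (fun t => f (x.1, x.2.1, x.2.2.1, t)) x.2.2.2

/-- The log-canonical Poisson bracket
{f,g} = q₁p₁(∂f/∂p₁·∂g/∂q₁ − ∂f/∂q₁·∂g/∂p₁) + q₂p₂(∂f/∂p₂·∂g/∂q₂ − ∂f/∂q₂·∂g/∂p₂). -/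
noncomputable def pbracket (f g : ℂ × ℂ × ℂ × ℂ → ℂ) (x : ℂ × ℂ × ℂ × ℂ) : ℂ :=
  x.1 * x.2.1 * (pdp1 f x * pdq1 g x - pdq1 f x * pdp1 g x)
    + x.2.2.1 * x.2.2.2 * (pdp2 f x * pdq2 g x - pdq2 f x * pdp2 g x)

/- STATEMENT 6: H₁ = I₁/I₀ and H₂ = I₂/I₀ are in involution: {H₁,H₂} = 0
at every point with q₁p₁q₂p₂ ≠ 0. -/
lemma deriv_quad_div (A0 A1 A2 D : ℂ) (hD : D ≠ 0) (t : ℂ) (ht : t ≠ 0) :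
    deriv (fun s => (A0 + A1 * s + A2 * s ^ 2) / (D * s)) t
      = (A2 * t ^ 2 - A0) / (D * t ^ 2) := by
  have hnum : HasDerivAt (fun s : ℂ => A0 + A1 * s + A2 * s ^ 2)
      (A1 + A2 * (2 * t)) t := by
    have h1 : HasDerivAt (fun s : ℂ => A1 * s) A1 t := by
      simpa using (hasDerivAt_id t).const_mul A1
    have h2 : HasDerivAt (fun s : ℂ => A2 * s ^ 2) (A2 * (2 * t)) t := by
      simpa using (hasDerivAt_pow 2 t).const_mul A2
    have := ((hasDerivAt_const t A0).add h1).add h2; rw [zero_add] at this; exact this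
  have hden : HasDerivAt (fun s : ℂ => D * s) D t := by
    simpa using (hasDerivAt_id t).const_mul D
  have h := (hnum.div hden (mul_ne_zero hD ht)).deriv
  rw [show (fun s => (A0 + A1 * s + A2 * s ^ 2) / (D * s)) = ((fun s => A0 + A1 * s + A2 * s ^ 2) / fun s => D * s) from rfl, h]
  field_simp
  ring

theorem H1_H2_in_involution (b : ℂ) (hb : b ≠ 0) (x : ℂ × ℂ × ℂ × ℂ)
    (h : x.1 * x.2.1 * x.2.2.1 * x.2.2.2 ≠ 0) :
    pbracket (fun y => I1 b y / I0 y) (fun y => I2 b y / I0 y) x = 0 := by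
  obtain ⟨q1, p1, q2, p2⟩ := x
  simp only [ne_eq, mul_eq_zero, not_or] at h
  obtain ⟨⟨⟨hq1, hp1⟩, hq2⟩, hp2⟩ := h
  have hK : q1 ^ 2 * p1 ^ 2 * q2 ^ 2 * p2 ^ 2 ≠ 0 :=
    mul_ne_zero (mul_ne_zero (mul_ne_zero (pow_ne_zero 2 hq1) (pow_ne_zero 2 hp1))
      (pow_ne_zero 2 hq2)) (pow_ne_zero 2 hp2)
  simp only [pbracket, pdq1, pdp1, pdq2, pdp2]
  have dI1q1 : deriv (fun t => I1 b (t, p1, q2, p2) / I0 (t, p1, q2, p2)) q1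
      = ((p1*q2*p2^2) * q1 ^ 2 - (q2*p2 + b*(p1*q2*p2))) * (p1*q2*p2) / (q1 ^ 2 * p1 ^ 2 * q2 ^ 2 * p2 ^ 2) := by
    have e : (fun t => I1 b (t, p1, q2, p2) / I0 (t, p1, q2, p2))
        = fun t => ((q2*p2 + b*(p1*q2*p2)) + (p1 + b*(p1*p2 + p1*q2 + q2*p2) + p1^2*q2^2*p2) * t + (p1*q2*p2^2) * t ^ 2) / ((p1*q2*p2) * t) := by
      funext t; simp only [I1, I2, I0]; ring
    rw [e, deriv_quad_div _ _ _ _ (mul_ne_zero (mul_ne_zero hp1 hq2) hp2) q1 hq1,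
      div_eq_div_iff (mul_ne_zero (mul_ne_zero (mul_ne_zero hp1 hq2) hp2) (pow_ne_zero 2 hq1)) hK]
    ring
  have dI1p1 : deriv (fun t => I1 b (q1, t, q2, p2) / I0 (q1, t, q2, p2)) p1
      = ((q1*q2^2*p2) * p1 ^ 2 - (q2*p2 + b*(q1*q2*p2))) * (q1*q2*p2) / (q1 ^ 2 * p1 ^ 2 * q2 ^ 2 * p2 ^ 2) := by
    have e : (fun t => I1 b (q1, t, q2, p2) / I0 (q1, t, q2, p2))
        = fun t => ((q2*p2 + b*(q1*q2*p2)) + (q1 + b*(q1*p2 + q2*p2 + q1*q2) + q1^2*q2*p2^2) * t + (q1*q2^2*p2) * t ^ 2) / ((q1*q2*p2) * t) := by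
      funext t; simp only [I1, I2, I0]; ring
    rw [e, deriv_quad_div _ _ _ _ (mul_ne_zero (mul_ne_zero hq1 hq2) hp2) p1 hp1,
      div_eq_div_iff (mul_ne_zero (mul_ne_zero (mul_ne_zero hq1 hq2) hp2) (pow_ne_zero 2 hp1)) hK]
    ring
  have dI1q2 : deriv (fun t => I1 b (q1, p1, t, p2) / I0 (q1, p1, t, p2)) q2
      = ((q1*p1^2*p2) * q2 ^ 2 - (q1*p1 + b*(q1*p1*p2))) * (q1*p1*p2) / (q1 ^ 2 * p1 ^ 2 * q2 ^ 2 * p2 ^ 2) := by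
    have e : (fun t => I1 b (q1, p1, t, p2) / I0 (q1, p1, t, p2))
        = fun t => ((q1*p1 + b*(q1*p1*p2)) + (p2 + b*(p1*p2 + q1*p1 + q1*p2) + q1^2*p1*p2^2) * t + (q1*p1^2*p2) * t ^ 2) / ((q1*p1*p2) * t) := by
      funext t; simp only [I1, I2, I0]; ring
    rw [e, deriv_quad_div _ _ _ _ (mul_ne_zero (mul_ne_zero hq1 hp1) hp2) q2 hq2,
      div_eq_div_iff (mul_ne_zero (mul_ne_zero (mul_ne_zero hq1 hp1) hp2) (pow_ne_zero 2 hq2)) hK]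
    ring
  have dI1p2 : deriv (fun t => I1 b (q1, p1, q2, t) / I0 (q1, p1, q2, t)) p2
      = ((q1^2*p1*q2) * p2 ^ 2 - (q1*p1 + b*(q1*p1*q2))) * (q1*p1*q2) / (q1 ^ 2 * p1 ^ 2 * q2 ^ 2 * p2 ^ 2) := by
    have e : (fun t => I1 b (q1, p1, q2, t) / I0 (q1, p1, q2, t))
        = fun t => ((q1*p1 + b*(q1*p1*q2)) + (q2 + b*(q1*p1 + p1*q2 + q1*q2) + q1*p1^2*q2^2) * t + (q1^2*p1*q2) * t ^ 2) / ((q1*p1*q2) * t) := by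
      funext t; simp only [I1, I2, I0]; ring
    rw [e, deriv_quad_div _ _ _ _ (mul_ne_zero (mul_ne_zero hq1 hp1) hq2) p2 hp2,
      div_eq_div_iff (mul_ne_zero (mul_ne_zero (mul_ne_zero hq1 hp1) hq2) (pow_ne_zero 2 hp2)) hK]
    ring
  have dI2q1 : deriv (fun t => I2 b (t, p1, q2, p2) / I0 (t, p1, q2, p2)) q1
      = ((p1^2*q2^2*p2^2 + b*(p1*q2*p2)) * q1 ^ 2 - (1 + b*(p1 + q2 + p2) + b^2*(p1*q2 + p1*p2))) * (p1*q2*p2) / (q1 ^ 2 * p1 ^ 2 * q2 ^ 2 * p2 ^ 2) := by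
    have e : (fun t => I2 b (t, p1, q2, p2) / I0 (t, p1, q2, p2))
        = fun t => ((1 + b*(p1 + q2 + p2) + b^2*(p1*q2 + p1*p2)) + (b + b*(p1*q2*p2)*(p1 + q2 + p2) + b^2*(q2 + p2)) * t + (p1^2*q2^2*p2^2 + b*(p1*q2*p2)) * t ^ 2) / ((p1*q2*p2) * t) := by
      funext t; simp only [I1, I2, I0]; ring
    rw [e, deriv_quad_div _ _ _ _ (mul_ne_zero (mul_ne_zero hp1 hq2) hp2) q1 hq1,
      div_eq_div_iff (mul_ne_zero (mul_ne_zero (mul_ne_zero hp1 hq2) hp2) (pow_ne_zero 2 hq1)) hK]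
    ring
  have dI2p1 : deriv (fun t => I2 b (q1, t, q2, p2) / I0 (q1, t, q2, p2)) p1
      = ((q1^2*q2^2*p2^2 + b*(q1*q2*p2)) * p1 ^ 2 - (1 + b*(q1 + q2 + p2) + b^2*(q1*q2 + q1*p2))) * (q1*q2*p2) / (q1 ^ 2 * p1 ^ 2 * q2 ^ 2 * p2 ^ 2) := by
    have e : (fun t => I2 b (q1, t, q2, p2) / I0 (q1, t, q2, p2))
        = fun t => ((1 + b*(q1 + q2 + p2) + b^2*(q1*q2 + q1*p2)) + (b + b*(q1*q2*p2)*(q1 + q2 + p2) + b^2*(q2 + p2)) * t + (q1^2*q2^2*p2^2 + b*(q1*q2*p2)) * t ^ 2) / ((q1*q2*p2) * t) := by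
      funext t; simp only [I1, I2, I0]; ring
    rw [e, deriv_quad_div _ _ _ _ (mul_ne_zero (mul_ne_zero hq1 hq2) hp2) p1 hp1,
      div_eq_div_iff (mul_ne_zero (mul_ne_zero (mul_ne_zero hq1 hq2) hp2) (pow_ne_zero 2 hp1)) hK]
    ring
  have dI2q2 : deriv (fun t => I2 b (q1, p1, t, p2) / I0 (q1, p1, t, p2)) q2
      = ((q1^2*p1^2*p2^2 + b*(q1*p1*p2)) * q2 ^ 2 - (1 + b*(q1 + p1 + p2) + b^2*(q1*p2 + p1*p2))) * (q1*p1*p2) / (q1 ^ 2 * p1 ^ 2 * q2 ^ 2 * p2 ^ 2) := by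
    have e : (fun t => I2 b (q1, p1, t, p2) / I0 (q1, p1, t, p2))
        = fun t => ((1 + b*(q1 + p1 + p2) + b^2*(q1*p2 + p1*p2)) + (b + b*(q1*p1*p2)*(q1 + p1 + p2) + b^2*(q1 + p1)) * t + (q1^2*p1^2*p2^2 + b*(q1*p1*p2)) * t ^ 2) / ((q1*p1*p2) * t) := by
      funext t; simp only [I1, I2, I0]; ring
    rw [e, deriv_quad_div _ _ _ _ (mul_ne_zero (mul_ne_zero hq1 hp1) hp2) q2 hq2,
      div_eq_div_iff (mul_ne_zero (mul_ne_zero (mul_ne_zero hq1 hp1) hp2) (pow_ne_zero 2 hq2)) hK]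
    ring
  have dI2p2 : deriv (fun t => I2 b (q1, p1, q2, t) / I0 (q1, p1, q2, t)) p2
      = ((q1^2*p1^2*q2^2 + b*(q1*p1*q2)) * p2 ^ 2 - (1 + b*(q1 + p1 + q2) + b^2*(q1*q2 + p1*q2))) * (q1*p1*q2) / (q1 ^ 2 * p1 ^ 2 * q2 ^ 2 * p2 ^ 2) := by
    have e : (fun t => I2 b (q1, p1, q2, t) / I0 (q1, p1, q2, t))
        = fun t => ((1 + b*(q1 + p1 + q2) + b^2*(q1*q2 + p1*q2)) + (b + b*(q1*p1*q2)*(q1 + p1 + q2) + b^2*(q1 + p1)) * t + (q1^2*p1^2*q2^2 + b*(q1*p1*q2)) * t ^ 2) / ((q1*p1*q2) * t) := by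
      funext t; simp only [I1, I2, I0]; ring
    rw [e, deriv_quad_div _ _ _ _ (mul_ne_zero (mul_ne_zero hq1 hp1) hq2) p2 hp2,
      div_eq_div_iff (mul_ne_zero (mul_ne_zero (mul_ne_zero hq1 hp1) hq2) (pow_ne_zero 2 hp2)) hK]
    ring
  rw [dI1q1, dI1p1, dI1q2, dI1p2, dI2q1, dI2p1, dI2q2, dI2p2,
    div_mul_div_comm, div_mul_div_comm, div_mul_div_comm, div_mul_div_comm,
    div_sub_div_same, div_sub_div_same, ← mul_div_assoc, ← mul_div_assoc,
    ← add_div, div_eq_zero_iff]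
  left
  ring
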